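/- Let A, B, C, p be points of the Euclidean plane such that the inner product ⟨A − C, B − C⟩ is nonnegative (i.e., the angle ∠ACB is at most π/2), and suppose p lies in the sector at C spanned by A and B, i.e., p = C + α(A − C) + β(B − C) for some reals α, β ≥ 0. If dist(p, C) ≤ dist(p, A) and dist(p, C) ≤ dist(p, B), then p lies in the triangle ACB, i.e., p belongs to the convex hull of {A, B, C}. Equivalently, every point of the sector lying outside the triangle ACB is strictly closer to A or to B than to C. -/

import Mathlib

open scoped RealInnerProductSpace

lemma combo3 (x y z : EuclideanSpace ℝ (Fin 2)) (a b c : ℝ)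
    (ha : 0 ≤ a) (hb : 0 ≤ b) (hc : 0 ≤ c) (habc : a + b + c = 1) :
    a • x + b • y + c • z ∈ convexHull ℝ ({x, y, z} : Set (EuclideanSpace ℝ (Fin 2))) := by
  have hconv : Convex ℝ (convexHull ℝ ({x, y, z} : Set (EuclideanSpace ℝ (Fin 2)))) :=
    convex_convexHull ℝ _
  have hx : x ∈ convexHull ℝ ({x, y, z} : Set (EuclideanSpace ℝ (Fin 2))) :=
    subset_convexHull ℝ _ (by simp)
  have hy : y ∈ convexHull ℝ ({x, y, z} : Set (EuclideanSpace ℝ (Fin 2))) :=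
    subset_convexHull ℝ _ (by simp)
  have hz : z ∈ convexHull ℝ ({x, y, z} : Set (EuclideanSpace ℝ (Fin 2))) :=
    subset_convexHull ℝ _ (by simp)
  have := hconv.sum_mem (t := Finset.univ) (w := ![a, b, c]) (z := ![x, y, z])
    (by intro i _; fin_cases i <;> simpa) (by simp [Fin.sum_univ_three, habc])
    (by intro i _; fin_cases i <;> simpa)
  simpa [Fin.sum_univ_three] using this

/-- If the angle `∠ACB` is at most `π/2` and `p` lies in the sector at `C` spanned by
`A` and `B`, then `p` being at least as close to `C` as to both `A` and `B` forces `p`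
to lie in the triangle `ACB`: every point of the sector outside the triangle is
strictly closer to `A` or to `B` than to `C`. -/
theorem stmt10 (A B C p : EuclideanSpace ℝ (Fin 2))
    (hangle : 0 ≤ (inner ℝ (A - C) (B - C) : ℝ))
    (α β : ℝ) (hα : 0 ≤ α) (hβ : 0 ≤ β)
    (hp : p = C + α • (A - C) + β • (B - C))
    (hA : dist p C ≤ dist p A) (hB : dist p C ≤ dist p B) :
    p ∈ convexHull ℝ ({A, B, C} : Set (EuclideanSpace ℝ (Fin 2))) := by
  set u := A - C with hu
  set v := B - C with hv
  set a : ℝ := ⟪u, u⟫ with ha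
  set b : ℝ := ⟪v, v⟫ with hb
  set s : ℝ := ⟪u, v⟫ with hs
  have ha0 : 0 ≤ a := real_inner_self_nonneg
  have hb0 : 0 ≤ b := real_inner_self_nonneg
  have exp : ∀ x y : ℝ, (⟪x • u + y • v, x • u + y • v⟫ : ℝ)
      = x ^ 2 * a + 2 * x * y * s + y ^ 2 * b := by
    intro x y
    simp only [inner_add_left, inner_add_right, real_inner_smul_left, real_inner_smul_right,
      ha, hb, hs]
    rw [real_inner_comm v u]
    ring
  have e1 : p - C = α • u + β • v := by rw [hp, hu, hv]; module
  have e2 : p - A = (α - 1) • u + β • v := by rw [hp, hu, hv]; module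
  have e3 : p - B = α • u + (β - 1) • v := by rw [hp, hu, hv]; module
  have sq1 : ‖p - C‖ ^ 2 ≤ ‖p - A‖ ^ 2 := by
    rw [dist_eq_norm, dist_eq_norm] at hA
    exact pow_le_pow_left₀ (norm_nonneg _) hA 2
  have sq2 : ‖p - C‖ ^ 2 ≤ ‖p - B‖ ^ 2 := by
    rw [dist_eq_norm, dist_eq_norm] at hB
    exact pow_le_pow_left₀ (norm_nonneg _) hB 2
  rw [← real_inner_self_eq_norm_sq, ← real_inner_self_eq_norm_sq, e1, e2, exp, exp] at sq1
  rw [← real_inner_self_eq_norm_sq, ← real_inner_self_eq_norm_sq, e1, e3, exp, exp] at sq2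
  have h1 : 2 * β * s ≤ (1 - 2 * α) * a := by nlinarith [sq1]
  have h2 : 2 * α * s ≤ (1 - 2 * β) * b := by nlinarith [sq2]
  by_cases hsum : α + β ≤ 1
  · have hpform : p = α • A + β • B + (1 - α - β) • C := by rw [hp]; module
    rw [hpform]
    exact combo3 A B C α β (1 - α - β) hα hβ (by linarith) (by ring)
  · push_neg at hsum
    by_cases hα2 : 1 / 2 < α
    · -- then a = 0, so u = 0, A = C
      have t1 : 0 ≤ (1 - 2 * α) * a := le_trans (by positivity) h1
      have haz : a = 0 := by
        rcases lt_or_eq_of_le ha0 with h | h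
        · exact absurd t1 (not_le.mpr (mul_neg_of_neg_of_pos (by linarith) h))
        · exact h.symm
      have huz : u = 0 := by rwa [ha, inner_self_eq_zero] at haz
      have hsz : s = 0 := by rw [hs, huz, inner_zero_left]
      by_cases hβ1 : β ≤ 1
      · have hpform : p = (0 : ℝ) • A + β • B + (1 - β) • C := by
          rw [hp, huz, hv]; module
        rw [hpform]
        exact combo3 A B C 0 β (1 - β) le_rfl hβ (by linarith) (by ring)
      · push_neg at hβ1
        have t2 : 0 ≤ (1 - 2 * β) * b := le_trans (by rw [hsz]; ring_nf; positivity) h2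
        have hbz : b = 0 := by
          rcases lt_or_eq_of_le hb0 with h | h
          · exact absurd t2 (not_le.mpr (mul_neg_of_neg_of_pos (by linarith) h))
          · exact h.symm
        have hvz : v = 0 := by rwa [hb, inner_self_eq_zero] at hbz
        have hpform : p = (0 : ℝ) • A + (0 : ℝ) • B + (1 : ℝ) • C := by
          rw [hp, huz, hvz]; module
        rw [hpform]
        exact combo3 A B C 0 0 1 le_rfl le_rfl zero_le_one (by ring)
    · push_neg at hα2
      have hβ2 : 1 / 2 < β := by linarith
      have t1 : 0 ≤ (1 - 2 * β) * b := le_trans (by positivity) h2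
      have hbz : b = 0 := by
        rcases lt_or_eq_of_le hb0 with h | h
        · exact absurd t1 (not_le.mpr (mul_neg_of_neg_of_pos (by linarith) h))
        · exact h.symm
      have hvz : v = 0 := by rwa [hb, inner_self_eq_zero] at hbz
      have hsz : s = 0 := by rw [hs, hvz, inner_zero_right]
      by_cases hα1 : α ≤ 1
      · have hpform : p = α • A + (0 : ℝ) • B + (1 - α) • C := by
          rw [hp, hvz, hu]; module
        rw [hpform]
        exact combo3 A B C α 0 (1 - α) hα le_rfl (by linarith) (by ring)
      · push_neg at hα1
        have t2 : 0 ≤ (1 - 2 * α) * a := le_trans (by rw [hsz]; ring_nf; positivity) h1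
        have haz : a = 0 := by
          rcases lt_or_eq_of_le ha0 with h | h
          · exact absurd t2 (not_le.mpr (mul_neg_of_neg_of_pos (by linarith) h))
          · exact h.symm
        have huz : u = 0 := by rwa [ha, inner_self_eq_zero] at haz
        have hpform : p = (0 : ℝ) • A + (0 : ℝ) • B + (1 : ℝ) • C := by
          rw [hp, huz, hvz]; module
        rw [hpform]
        exact combo3 A B C 0 0 1 le_rfl le_rfl zero_le_one (by ring)
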